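/- Fix n ≥ 2, κ > 0, α = κ(n-1)/(n+1). In the equilibrium with strategies aᵢ(t) = Bᵢ(e^{κt}-1) + Dᵢ(1-e^{-αt}), the implementation cost of trader i, defined as λᵢ ∫₀¹ (m'(t) + κ m(t)) aᵢ'(t) dt with m(t) = (1-e^{-αt})/(1-e^{-α}), equals κ(λᵢ n - 1)/(n(1 - e^{-κ})) + α/(n(e^α - 1)) + κ/(n+1). -/

import Mathlib

open Real intervalIntegral

private lemma expAux (c t : ℝ) :
    HasDerivAt (fun x : ℝ => Real.exp (c * x)) (c * Real.exp (c * t)) t := by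
  refine ((hasDerivAt_id' t).const_mul c).exp.congr_deriv ?_
  ring

set_option maxHeartbeats 2000000 in
/-- Trader `i`'s implementation cost in equilibrium,
`λᵢ ∫₀¹ (m' + κ m) aᵢ' dt`, equals
`κ(λᵢn - 1)/(n(1-e^{-κ})) + α/(n(e^α-1)) + κ/(n+1)`. -/
theorem stmt_13 (n : ℕ) (hn : 2 ≤ n) (κ : ℝ) (hκ : 0 < κ)
    (α : ℝ) (hα : α = κ * ((n : ℝ) - 1) / ((n : ℝ) + 1))
    (lam : Fin n → ℝ) (hpos : ∀ i, 0 < lam i) (hsum : ∑ i, lam i = 1)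
    (B D : Fin n → ℝ)
    (hB : ∀ i, B i = (lam i * n - 1) / (lam i * n * (Real.exp κ - 1)))
    (hD : ∀ i, D i = 1 / (lam i * n * (1 - Real.exp (-α))))
    (a : Fin n → ℝ → ℝ)
    (ha : ∀ i t, a i t = B i * (Real.exp (κ * t) - 1) + D i * (1 - Real.exp (-α * t)))
    (m : ℝ → ℝ) (hm : ∀ t, m t = (1 - Real.exp (-α * t)) / (1 - Real.exp (-α))) :
    ∀ i, lam i * ∫ t in (0:ℝ)..1, (deriv m t + κ * m t) * deriv (a i) t
      = κ * (lam i * n - 1) / ((n : ℝ) * (1 - Real.exp (-κ)))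
        + α / ((n : ℝ) * (Real.exp α - 1)) + κ / ((n : ℝ) + 1) := by
  intro i
  have hN2 : (2:ℝ) ≤ (n:ℝ) := by exact_mod_cast hn
  have hN0 : (0:ℝ) < (n:ℝ) := by linarith
  have hN1 : (0:ℝ) < (n:ℝ) - 1 := by linarith
  have hNp1 : (0:ℝ) < (n:ℝ) + 1 := by linarith
  have hα0 : 0 < α := by rw [hα]; positivity
  have hmfun : m = fun t => (1 - Real.exp (-α * t)) / (1 - Real.exp (-α)) := funext hm
  subst hmfun
  have hafun : a = fun j t => B j * (Real.exp (κ * t) - 1) + D j * (1 - Real.exp (-α * t)) := by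
    funext j t; exact ha j t
  subst hafun
  have he1 : (0:ℝ) < 1 - Real.exp (-α) := by
    have : Real.exp (-α) < 1 := Real.exp_lt_one_iff.mpr (by linarith)
    linarith
  -- derivative of m
  have hdm : ∀ t : ℝ,
      HasDerivAt (fun t => (1 - Real.exp (-α * t)) / (1 - Real.exp (-α)))
        (α * Real.exp (-α * t) / (1 - Real.exp (-α))) t := by
    intro t
    have := ((hasDerivAt_const t (1:ℝ)).sub (expAux (-α) t)).div_const (1 - Real.exp (-α))
    refine this.congr_deriv ?_
    ring
  have hda : ∀ t : ℝ,
      HasDerivAt (fun t => B i * (Real.exp (κ * t) - 1) + D i * (1 - Real.exp (-α * t)))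
        (B i * (κ * Real.exp (κ * t)) + D i * (α * Real.exp (-α * t))) t := by
    intro t
    have h1 := (((expAux κ t).sub_const 1).const_mul (B i))
    have h2 := (((hasDerivAt_const t (1:ℝ)).sub (expAux (-α) t)).const_mul (D i))
    refine (h1.add h2).congr_deriv ?_
    ring
  -- the antiderivative
  set F : ℝ → ℝ := fun t =>
    (B i * κ * Real.exp (κ * t) - κ * D i * Real.exp (-α * t)
      - B i * κ * Real.exp ((κ - α) * t) - (α - κ) * D i / 2 * Real.exp (-(2 * α) * t))
      / (1 - Real.exp (-α)) with hF
  have hFderiv : ∀ t : ℝ,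
      HasDerivAt F
        ((α * Real.exp (-α * t) / (1 - Real.exp (-α))
          + κ * ((1 - Real.exp (-α * t)) / (1 - Real.exp (-α))))
          * (B i * (κ * Real.exp (κ * t)) + D i * (α * Real.exp (-α * t)))) t := by
    intro t
    have h1 := ((expAux κ t).const_mul (B i * κ)).sub ((expAux (-α) t).const_mul (κ * D i))
    have h2 := h1.sub ((expAux (κ - α) t).const_mul (B i * κ))
    have h3 := h2.sub ((expAux (-(2 * α)) t).const_mul ((α - κ) * D i / 2))
    have h4 := h3.div_const (1 - Real.exp (-α))
    refine h4.congr_deriv ?_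
    rw [show (κ - α) * t = κ * t + -α * t by ring, Real.exp_add,
      show -(2 * α) * t = -α * t + -α * t by ring, Real.exp_add]
    field_simp
    ring
  -- rewrite the integrand using the derivative formulas
  have hrw : (fun t => (deriv (fun t => (1 - Real.exp (-α * t)) / (1 - Real.exp (-α))) t
        + κ * ((1 - Real.exp (-α * t)) / (1 - Real.exp (-α))))
        * deriv (fun t => B i * (Real.exp (κ * t) - 1) + D i * (1 - Real.exp (-α * t))) t)
      = fun t => (α * Real.exp (-α * t) / (1 - Real.exp (-α))
          + κ * ((1 - Real.exp (-α * t)) / (1 - Real.exp (-α))))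
          * (B i * (κ * Real.exp (κ * t)) + D i * (α * Real.exp (-α * t))) := by
    funext t
    rw [(hdm t).deriv, (hda t).deriv]
  have hint : (∫ t in (0:ℝ)..1,
      (deriv (fun t => (1 - Real.exp (-α * t)) / (1 - Real.exp (-α))) t
        + κ * ((1 - Real.exp (-α * t)) / (1 - Real.exp (-α))))
        * deriv (fun t => B i * (Real.exp (κ * t) - 1) + D i * (1 - Real.exp (-α * t))) t)
      = F 1 - F 0 := by
    rw [intervalIntegral.integral_congr (g := fun t =>
      (α * Real.exp (-α * t) / (1 - Real.exp (-α))
        + κ * ((1 - Real.exp (-α * t)) / (1 - Real.exp (-α))))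
        * (B i * (κ * Real.exp (κ * t)) + D i * (α * Real.exp (-α * t))))
      (fun t _ => by rw [(hdm t).deriv, (hda t).deriv])]
    apply intervalIntegral.integral_eq_sub_of_hasDerivAt (fun t _ => hFderiv t)
    apply Continuous.intervalIntegrable
    fun_prop
  simp only [hint]
  -- final algebra
  rw [hF, hB, hD]
  simp only [mul_one, mul_zero, Real.exp_zero]
  have hlam : lam i ≠ 0 := ne_of_gt (hpos i)
  have hX1 : Real.exp κ - 1 ≠ 0 := by
    have : (1:ℝ) < Real.exp κ := Real.one_lt_exp_iff.mpr hκ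
    linarith
  have hY1 : Real.exp α - 1 ≠ 0 := by
    have : (1:ℝ) < Real.exp α := Real.one_lt_exp_iff.mpr hα0
    linarith
  have he1' : 1 - Real.exp (-α) ≠ 0 := ne_of_gt he1
  have heκ : 1 - Real.exp (-κ) ≠ 0 := by
    have : Real.exp (-κ) < 1 := Real.exp_lt_one_iff.mpr (by linarith)
    linarith
  have hκval : κ = α * ((n:ℝ) + 1) / ((n:ℝ) - 1) := by
    rw [hα]; field_simp
  rw [Real.exp_sub, Real.exp_neg α, Real.exp_neg κ,
    show -(2 * α) = -α + -α by ring, Real.exp_add, Real.exp_neg α]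
  rw [Real.exp_neg α] at he1'
  rw [Real.exp_neg κ] at heκ
  clear hint hrw hFderiv hdm hda hF hm ha hB hD hsum hα
  set X := Real.exp κ with hXdef
  set Y := Real.exp α with hYdef
  have hX0 : X ≠ 0 := by rw [hXdef]; exact Real.exp_ne_zero κ
  have hY0 : Y ≠ 0 := by rw [hYdef]; exact Real.exp_ne_zero α
  have hN0' : (n:ℝ) ≠ 0 := ne_of_gt hN0
  have hN1' : (n:ℝ) - 1 ≠ 0 := ne_of_gt hN1
  have hNp1' : (n:ℝ) + 1 ≠ 0 := ne_of_gt hNp1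
  rw [hκval]
  field_simp
  ring
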